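/- Let p(r) = w₀ + w₁r + w₂r²/2 + w₃r³/6 + w₄r⁴/24 with max_i |w_i| = 1. Then sup_{r ∈ [0,1]} max(|p(r)|, |p'(r)|) ≥ c for some absolute constant c > 0 (e.g. c = 1/100 works). -/
import Mathlib


/-- p(r) = w₀ + w₁r + w₂r²/2 + w₃r³/6 + w₄r⁴/24. -/
noncomputable def pPoly (w : Fin 5 → ℝ) (r : ℝ) : ℝ :=
  w 0 + w 1 * r + w 2 * (r ^ 2 / 2) + w 3 * (r ^ 3 / 6) + w 4 * (r ^ 4 / 24)

/-- p'(r). -/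
noncomputable def pPoly' (w : Fin 5 → ℝ) (r : ℝ) : ℝ :=
  w 1 + w 2 * r + w 3 * (r ^ 2 / 2) + w 4 * (r ^ 3 / 6)

/-- Quantitative non-degeneracy: if ‖w‖_∞ = 1 then max(|p|,|p'|) is ≥ c
somewhere on [0,1], for some absolute constant c > 0. -/
theorem poly_nondegeneracy :
    ∃ c : ℝ, c > 0 ∧ ∀ w : Fin 5 → ℝ,
      (∀ i, |w i| ≤ 1) → (∃ i, |w i| = 1) →
      ∃ r ∈ Set.Icc (0 : ℝ) 1, max |pPoly w r| |pPoly' w r| ≥ c := by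
  refine ⟨1/4096, by norm_num, ?_⟩
  intro w _ ⟨i, hi⟩
  by_contra h
  push_neg at h
  have key : ∀ r ∈ Set.Icc (0:ℝ) 1, |pPoly w r| < 1/4096 := fun r hr =>
    lt_of_le_of_lt (le_max_left _ _) (h r hr)
  have h0 := key 0 (by norm_num)
  have h1 := key (1/4) (by constructor <;> norm_num)
  have h2 := key (1/2) (by constructor <;> norm_num)
  have h3 := key (3/4) (by constructor <;> norm_num)
  have h4 := key 1 (by constructor <;> norm_num)
  rw [abs_lt] at h0 h1 h2 h3 h4
  obtain ⟨h0l, h0r⟩ := h0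
  obtain ⟨h1l, h1r⟩ := h1
  obtain ⟨h2l, h2r⟩ := h2
  obtain ⟨h3l, h3r⟩ := h3
  obtain ⟨h4l, h4r⟩ := h4
  have e0 : pPoly w 0 = w 0 := by simp [pPoly]
  have e1 : pPoly w (1/4) = w 0 + w 1/4 + w 2/32 + w 3/384 + w 4/6144 := by
    simp only [pPoly]; ring
  have e2 : pPoly w (1/2) = w 0 + w 1/2 + w 2/8 + w 3/48 + w 4/384 := by
    simp only [pPoly]; ring
  have e3 : pPoly w (3/4) = w 0 + 3*w 1/4 + 9*w 2/32 + 9*w 3/128 + 27*w 4/2048 := by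
    simp only [pPoly]; ring
  have e4 : pPoly w 1 = w 0 + w 1 + w 2/2 + w 3/6 + w 4/24 := by
    simp only [pPoly]; ring
  rw [e0] at h0l h0r; rw [e1] at h1l h1r; rw [e2] at h2l h2r
  rw [e3] at h3l h3r; rw [e4] at h4l h4r
  have a0 : |w 0| < 1 := abs_lt.mpr ⟨by linarith, by linarith⟩
  have a1 : |w 1| < 1 := abs_lt.mpr ⟨by linarith, by linarith⟩
  have a2 : |w 2| < 1 := abs_lt.mpr ⟨by linarith, by linarith⟩
  have a3 : |w 3| < 1 := abs_lt.mpr ⟨by linarith, by linarith⟩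
  have a4 : |w 4| < 1 := abs_lt.mpr ⟨by linarith, by linarith⟩
  have hall : |w i| < 1 := by fin_cases i <;> assumption
  rw [hi] at hall
  exact absurd hall (by norm_num)
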